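/- Let X ~ N(μ, σ²) and, independently, ε ~ N(0, τ²), with σ, τ > 0. Then the density of Y = max(X, 0) + ε at a point u decomposes as p_Y(u) = Φ(−μ/σ) φ(u; 0, τ²) + φ(u; μ, σ² + τ²) Φ(μ_*/σ_*), where μ_* = (uσ² + μτ²)/(σ² + τ²) and σ_*² = σ²τ²/(σ² + τ²). -/

import Mathlib

open MeasureTheory Real ProbabilityTheory

noncomputable def stdPdf (x : ℝ) : ℝ := (Real.sqrt (2 * π))⁻¹ * Real.exp (-x ^ 2 / 2)
noncomputable def stdCdf (x : ℝ) : ℝ := ∫ t in Set.Iic x, stdPdf t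
noncomputable def gaussPdf (m v x : ℝ) : ℝ :=
  (Real.sqrt (2 * π * v))⁻¹ * Real.exp (-(x - m) ^ 2 / (2 * v))

lemma stdPdf_eq (x : ℝ) : stdPdf x = gaussianPDFReal 0 1 x := by
  simp [stdPdf, gaussianPDFReal]

lemma gaussPdf_eq (m : ℝ) {v : ℝ} (hv : 0 < v) (x : ℝ) :
    gaussPdf m v x = gaussianPDFReal m v.toNNReal x := by
  simp [gaussPdf, gaussianPDFReal, Real.coe_toNNReal _ hv.le]

lemma stdPdf_nonneg (x : ℝ) : 0 ≤ stdPdf x := by unfold stdPdf; positivity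

lemma gaussPdf_nonneg (m v x : ℝ) : 0 ≤ gaussPdf m v x := by unfold gaussPdf; positivity

lemma stdCdf_nonneg (x : ℝ) : 0 ≤ stdCdf x :=
  integral_nonneg fun t => stdPdf_nonneg t

lemma gaussianReal_Iic {v : ℝ} (hv : 0 < v) (m a : ℝ) :
    gaussianReal m v.toNNReal (Set.Iic a) = ENNReal.ofReal (stdCdf ((a - m) / Real.sqrt v)) := by
  have hs : (0:ℝ) < Real.sqrt v := Real.sqrt_pos.mpr hv
  have hmap : (gaussianReal 0 1).map (fun x => Real.sqrt v * x + m) = gaussianReal m v.toNNReal := by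
    have h1 : (gaussianReal 0 1).map (fun x => Real.sqrt v * x) = gaussianReal 0 v.toNNReal := by
      rw [show (fun x => Real.sqrt v * x) = (Real.sqrt v * ·) from rfl,
        gaussianReal_map_const_mul]
      congr 1
      · ring
      · ext
        simp [Real.sq_sqrt hv.le, Real.coe_toNNReal _ hv.le]
    have h2 : (fun x => Real.sqrt v * x + m) = (· + m) ∘ (fun x => Real.sqrt v * x) := rfl
    rw [h2, ← Measure.map_map (measurable_add_const m) (measurable_const_mul _), h1,
      gaussianReal_map_add_const, zero_add]
  have hpre : (fun x => Real.sqrt v * x + m) ⁻¹' Set.Iic a = Set.Iic ((a - m) / Real.sqrt v) := by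
    ext x
    simp only [Set.mem_preimage, Set.mem_Iic]
    rw [le_div_iff₀ hs]
    constructor <;> intro h <;> nlinarith
  rw [← hmap, Measure.map_apply (by fun_prop) measurableSet_Iic, hpre,
    gaussianReal_apply_eq_integral _ one_ne_zero]
  congr 1
  unfold stdCdf
  refine setIntegral_congr_fun measurableSet_Iic fun x _ => ?_
  rw [stdPdf_eq]

lemma lintegral_gaussPdf_set {v : ℝ} (hv : 0 < v) (m : ℝ) (s : Set ℝ) :
    ∫⁻ x in s, ENNReal.ofReal (gaussPdf m v x) = gaussianReal m v.toNNReal s := by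
  have hv' : v.toNNReal ≠ 0 := ne_of_gt (Real.toNNReal_pos.mpr hv)
  rw [gaussianReal_apply m hv' s]
  congr 1
  ext x
  rw [gaussianPDF, ← gaussPdf_eq m hv]

lemma lintegral_gaussPdf_Iic {v : ℝ} (hv : 0 < v) (m a : ℝ) :
    ∫⁻ x in Set.Iic a, ENNReal.ofReal (gaussPdf m v x)
      = ENNReal.ofReal (stdCdf ((a - m) / Real.sqrt v)) := by
  rw [lintegral_gaussPdf_set hv, gaussianReal_Iic hv]

lemma lintegral_gaussPdf_Iio {v : ℝ} (hv : 0 < v) (m a : ℝ) :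
    ∫⁻ x in Set.Iio a, ENNReal.ofReal (gaussPdf m v x)
      = ENNReal.ofReal (stdCdf ((a - m) / Real.sqrt v)) := by
  rw [← lintegral_gaussPdf_Iic hv m a]
  exact setLIntegral_congr MeasureTheory.Iio_ae_eq_Iic

lemma lintegral_gaussPdf_Ici {v : ℝ} (hv : 0 < v) (m a : ℝ) :
    ∫⁻ x in Set.Ici a, ENNReal.ofReal (gaussPdf m v x)
      = ENNReal.ofReal (stdCdf ((m - a) / Real.sqrt v)) := by
  have hneg : gaussianReal m v.toNNReal (Set.Ici a)
      = gaussianReal (-m) v.toNNReal (Set.Iic (-a)) := by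
    have hm : (gaussianReal m v.toNNReal).map (fun x => -x) = gaussianReal (-m) v.toNNReal := by
      rw [show (fun x : ℝ => -x) = ((-1 : ℝ) * ·) by funext x; ring, gaussianReal_map_const_mul]
      norm_num
    rw [← hm, Measure.map_apply measurable_neg measurableSet_Iic]
    congr 1
    ext x
    simp
  rw [lintegral_gaussPdf_set hv, hneg, gaussianReal_Iic hv]
  ring_nf

lemma gauss_prod {σ τ : ℝ} (hσ : 0 < σ) (hτ : 0 < τ) (m u x : ℝ) :
    gaussPdf m (σ^2) x * gaussPdf x (τ^2) u =
      gaussPdf m (σ^2 + τ^2) u *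
        gaussPdf ((u * σ^2 + m * τ^2) / (σ^2 + τ^2)) (σ^2 * τ^2 / (σ^2 + τ^2)) x := by
  have hσ2 : (0:ℝ) < σ^2 := by positivity
  have hτ2 : (0:ℝ) < τ^2 := by positivity
  have hsum : (0:ℝ) < σ^2 + τ^2 := by positivity
  have hπ : (0:ℝ) < π := Real.pi_pos
  unfold gaussPdf
  rw [show ((Real.sqrt (2*π*σ^2))⁻¹ * Real.exp (-(x-m)^2/(2*σ^2))) *
        ((Real.sqrt (2*π*τ^2))⁻¹ * Real.exp (-(u-x)^2/(2*τ^2)))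
      = ((Real.sqrt (2*π*σ^2))⁻¹ * (Real.sqrt (2*π*τ^2))⁻¹) *
        (Real.exp (-(x-m)^2/(2*σ^2)) * Real.exp (-(u-x)^2/(2*τ^2))) by ring,
    show ((Real.sqrt (2*π*(σ^2+τ^2)))⁻¹ * Real.exp (-(u-m)^2/(2*(σ^2+τ^2)))) *
        ((Real.sqrt (2*π*(σ^2*τ^2/(σ^2+τ^2))))⁻¹ *
          Real.exp (-(x-(u*σ^2+m*τ^2)/(σ^2+τ^2))^2/(2*(σ^2*τ^2/(σ^2+τ^2)))))
      = ((Real.sqrt (2*π*(σ^2+τ^2)))⁻¹ * (Real.sqrt (2*π*(σ^2*τ^2/(σ^2+τ^2))))⁻¹) *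
        (Real.exp (-(u-m)^2/(2*(σ^2+τ^2))) *
          Real.exp (-(x-(u*σ^2+m*τ^2)/(σ^2+τ^2))^2/(2*(σ^2*τ^2/(σ^2+τ^2))))) by ring,
    ← Real.exp_add, ← Real.exp_add]
  congr 1
  · rw [← Real.sqrt_inv, ← Real.sqrt_inv, ← Real.sqrt_mul (by positivity),
      ← Real.sqrt_inv, ← Real.sqrt_inv, ← Real.sqrt_mul (by positivity)]
    congr 1
    field_simp
  · congr 1
    field_simp
    ring

lemma gaussPdf_continuous2 (v : ℝ) : Continuous fun p : ℝ × ℝ => gaussPdf p.1 v p.2 := by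
  unfold gaussPdf
  fun_prop

lemma gaussPdf_meas (m v : ℝ) : Measurable fun x => ENNReal.ofReal (gaussPdf m v x) := by
  unfold gaussPdf
  fun_prop

lemma gaussPdf_meas2 (m v w : ℝ) :
    Measurable fun p : ℝ × ℝ => ENNReal.ofReal (gaussPdf m v p.1 * gaussPdf p.1 w p.2) := by
  unfold gaussPdf
  fun_prop

lemma gaussPdf_const_mul_meas (c m v : ℝ) :
    Measurable fun x => ENNReal.ofReal (c * gaussPdf m v x) := by
  unfold gaussPdf
  fun_prop

/-- Density of `Y = max(X, 0) + ε` for independent `X ∼ N(μ, σ²)` and `ε ∼ N(0, τ²)`: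
`p_Y(u) = Φ(−μ/σ) φ(u; 0, τ²) + φ(u; μ, σ² + τ²) Φ(μ⋆(u)/σ⋆)`, where
`μ⋆(u) = (uσ² + μτ²)/(σ² + τ²)` and `σ⋆² = σ²τ²/(σ² + τ²)`. -/
theorem relu_output_density {Ω : Type*} [MeasurableSpace Ω] (P : Measure Ω)
    [IsProbabilityMeasure P] (X ε : Ω → ℝ) (hX : Measurable X) (hε : Measurable ε)
    (μ σ τ : ℝ) (hσ : 0 < σ) (hτ : 0 < τ)
    (hXlaw : P.map X = gaussianReal μ (Real.toNNReal (σ ^ 2)))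
    (hεlaw : P.map ε = gaussianReal 0 (Real.toNNReal (τ ^ 2)))
    (hindep : IndepFun X ε P) :
    P.map (fun ω => max (X ω) 0 + ε ω) =
      volume.withDensity (fun u => ENNReal.ofReal
        (stdCdf (-μ / σ) * gaussPdf 0 (τ ^ 2) u +
          gaussPdf μ (σ ^ 2 + τ ^ 2) u *
            stdCdf (((u * σ ^ 2 + μ * τ ^ 2) / (σ ^ 2 + τ ^ 2)) /
              Real.sqrt (σ ^ 2 * τ ^ 2 / (σ ^ 2 + τ ^ 2))))) := by
  have hσ2 : (0:ℝ) < σ^2 := by positivity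
  have hτ2 : (0:ℝ) < τ^2 := by positivity
  have hsum : (0:ℝ) < σ^2 + τ^2 := by positivity
  have hstar : (0:ℝ) < σ^2 * τ^2 / (σ^2 + τ^2) := by positivity
  have hσ' : (σ^2).toNNReal ≠ 0 := ne_of_gt (Real.toNNReal_pos.mpr hσ2)
  have hmeas_f : Measurable (fun p : ℝ × ℝ => max p.1 0 + p.2) := by fun_prop
  have hjoint : P.map (fun ω => (X ω, ε ω))
      = (gaussianReal μ (σ^2).toNNReal).prod (gaussianReal 0 (τ^2).toNNReal) := by
    rw [← hXlaw, ← hεlaw]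
    exact (indepFun_iff_map_prod_eq_prod_map_map hX.aemeasurable hε.aemeasurable).mp hindep
  have hmap : P.map (fun ω => max (X ω) 0 + ε ω)
      = ((gaussianReal μ (σ^2).toNNReal).prod (gaussianReal 0 (τ^2).toNNReal)).map
          (fun p : ℝ × ℝ => max p.1 0 + p.2) := by
    rw [← hjoint, Measure.map_map hmeas_f (hX.prodMk hε)]
    rfl
  rw [hmap]
  ext s hs
  rw [Measure.map_apply hmeas_f hs, Measure.prod_apply (hmeas_f hs), withDensity_apply _ hs]
  have hinner : ∀ c : ℝ,
      (gaussianReal 0 (τ^2).toNNReal)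
          (Prod.mk c ⁻¹' ((fun p : ℝ × ℝ => max p.1 0 + p.2) ⁻¹' s))
        = ∫⁻ u in s, ENNReal.ofReal (gaussPdf (max c 0) (τ^2) u) := by
    intro c
    have hp : Prod.mk c ⁻¹' ((fun p : ℝ × ℝ => max p.1 0 + p.2) ⁻¹' s)
        = (· + max c 0) ⁻¹' s := by
      ext e
      simp [add_comm]
    rw [hp, ← Measure.map_apply (measurable_add_const _) hs, gaussianReal_map_add_const,
      zero_add, lintegral_gaussPdf_set hτ2]
  simp_rw [hinner]
  -- measurability of the inner integral as a function of x
  have hum : ∀ c : ℝ, Measurable fun u => ENNReal.ofReal (gaussPdf c (τ^2) u) := by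
    intro c
    exact (((gaussPdf_continuous2 (τ^2)).comp (by fun_prop :
      Continuous fun u : ℝ => ((c : ℝ), u))).measurable).ennreal_ofReal
  have hG : Measurable fun x : ℝ => ∫⁻ u in s, ENNReal.ofReal (gaussPdf (max x 0) (τ^2) u) := by
    exact Measurable.lintegral_prod_right' (ν := volume.restrict s)
      ((((gaussPdf_continuous2 (τ^2)).comp (by fun_prop :
        Continuous fun p : ℝ × ℝ => (max p.1 0, p.2))).measurable).ennreal_ofReal)
  rw [gaussianReal_of_var_ne_zero μ hσ',
    lintegral_withDensity_eq_lintegral_mul _ (measurable_gaussianPDF _ _) hG]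
  have hpdf1 : ∀ x : ℝ, gaussianPDF μ (σ^2).toNNReal x = ENNReal.ofReal (gaussPdf μ (σ^2) x) :=
    fun x => by rw [gaussianPDF, ← gaussPdf_eq μ hσ2]
  simp only [Pi.mul_apply, hpdf1]
  rw [← lintegral_add_compl
    (fun x => ENNReal.ofReal (gaussPdf μ (σ^2) x) *
      ∫⁻ u in s, ENNReal.ofReal (gaussPdf (max x 0) (τ^2) u))
    (measurableSet_Iio (a := (0:ℝ))), Set.compl_Iio]
  have hA : (∫⁻ x in Set.Iio 0, ENNReal.ofReal (gaussPdf μ (σ^2) x) *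
        ∫⁻ u in s, ENNReal.ofReal (gaussPdf (max x 0) (τ^2) u))
      = ∫⁻ u in s, ENNReal.ofReal (stdCdf (-μ / σ) * gaussPdf 0 (τ^2) u) := by
    rw [setLIntegral_congr_fun measurableSet_Iio (fun x (hx : x < 0) => by
      rw [max_eq_right hx.le] :
        ∀ x : ℝ, x ∈ Set.Iio 0 →
          (ENNReal.ofReal (gaussPdf μ (σ^2) x) *
            ∫⁻ u in s, ENNReal.ofReal (gaussPdf (max x 0) (τ^2) u))
          = ENNReal.ofReal (gaussPdf μ (σ^2) x) *
            ∫⁻ u in s, ENNReal.ofReal (gaussPdf 0 (τ^2) u)),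
      lintegral_mul_const _ (gaussPdf_meas μ (σ^2)),
      lintegral_gaussPdf_Iio hσ2 μ 0, ← lintegral_const_mul _ (hum 0)]
    congr 1
    ext u
    rw [← ENNReal.ofReal_mul (stdCdf_nonneg _)]
    congr 2
    rw [Real.sqrt_sq hσ.le]
    ring_nf
  have hB : (∫⁻ x in Set.Ici 0, ENNReal.ofReal (gaussPdf μ (σ^2) x) *
        ∫⁻ u in s, ENNReal.ofReal (gaussPdf (max x 0) (τ^2) u))
      = ∫⁻ u in s, ENNReal.ofReal (gaussPdf μ (σ^2 + τ^2) u *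
          stdCdf (((u * σ^2 + μ * τ^2) / (σ^2 + τ^2)) /
            Real.sqrt (σ^2 * τ^2 / (σ^2 + τ^2)))) := by
    have h1 : (∫⁻ x in Set.Ici 0, ENNReal.ofReal (gaussPdf μ (σ^2) x) *
          ∫⁻ u in s, ENNReal.ofReal (gaussPdf (max x 0) (τ^2) u))
        = ∫⁻ x in Set.Ici 0, ∫⁻ u in s,
            ENNReal.ofReal (gaussPdf μ (σ^2) x * gaussPdf x (τ^2) u) := by
      refine setLIntegral_congr_fun measurableSet_Ici (fun x (hx : 0 ≤ x) => ?_)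
      rw [max_eq_left hx, ← lintegral_const_mul _ (hum x)]
      refine lintegral_congr fun u => ?_
      rw [← ENNReal.ofReal_mul (gaussPdf_nonneg _ _ _)]
    rw [h1, lintegral_lintegral_swap ((gaussPdf_meas2 μ (σ^2) (τ^2)).aemeasurable)]
    refine setLIntegral_congr_fun hs (fun u _ => ?_)
    calc ∫⁻ x in Set.Ici 0, ENNReal.ofReal (gaussPdf μ (σ^2) x * gaussPdf x (τ^2) u)
        = ∫⁻ x in Set.Ici 0, ENNReal.ofReal (gaussPdf μ (σ^2 + τ^2) u) *
            ENNReal.ofReal (gaussPdf ((u * σ^2 + μ * τ^2) / (σ^2 + τ^2))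
              (σ^2 * τ^2 / (σ^2 + τ^2)) x) := by
          refine setLIntegral_congr_fun measurableSet_Ici (fun x _ => ?_)
          rw [gauss_prod hσ hτ μ u x, ENNReal.ofReal_mul (gaussPdf_nonneg _ _ _)]
      _ = ENNReal.ofReal (gaussPdf μ (σ^2 + τ^2) u) *
            ∫⁻ x in Set.Ici 0, ENNReal.ofReal (gaussPdf ((u * σ^2 + μ * τ^2) / (σ^2 + τ^2))
              (σ^2 * τ^2 / (σ^2 + τ^2)) x) := lintegral_const_mul _ (gaussPdf_meas _ _)
      _ = _ := by
          rw [lintegral_gaussPdf_Ici hstar, sub_zero,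
            ← ENNReal.ofReal_mul (gaussPdf_nonneg _ _ _)]
  rw [hA, hB, ← lintegral_add_left (gaussPdf_const_mul_meas (stdCdf (-μ / σ)) 0 (τ^2))]
  refine setLIntegral_congr_fun hs (fun u _ => ?_)
  rw [ENNReal.ofReal_add (mul_nonneg (stdCdf_nonneg _) (gaussPdf_nonneg _ _ _))
    (mul_nonneg (gaussPdf_nonneg _ _ _) (stdCdf_nonneg _))]
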